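/- Let v = (v₁₂, v₁₃, v₁₄, v₂₃, v₂₄, v₃₄) ∈ ℤ≥0⁶ satisfy all three Plücker-type inequalities strictly (i.e., v is an interior point of the discrete Plücker set), and suppose two adjacent coordinates of v equal 1, i.e., there are indices i, j, k ∈ {1,2,3,4} with j ≠ k, j ≠ i, k ≠ i such that v_{ij} = v_{ik} = 1 (where v_{pq} = v_{qp}). Then there exist lattice polytopes P₁, P₂, P₃, P₄ in ℝ² such that V(Pᵢ,Pⱼ) = v_{ij} for all 1 ≤ i < j ≤ 4. -/

import Mathlib

open MeasureTheory Pointwise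

/-- Normalized mixed area of two compact convex sets in ℝ². -/
noncomputable def mixedArea (P Q : Set (ℝ × ℝ)) : ℝ :=
  (volume (P + Q)).toReal - (volume P).toReal - (volume Q).toReal

/-- Embedding of ℤ² into ℝ². -/
def latticeEmbed (p : ℤ × ℤ) : ℝ × ℝ := ((p.1 : ℝ), (p.2 : ℝ))

/-- A lattice polytope in ℝ² is the convex hull of a finite nonempty set of lattice points. -/
def IsLatticePolytope (P : Set (ℝ × ℝ)) : Prop :=
  ∃ S : Finset (ℤ × ℤ), S.Nonempty ∧ P = convexHull ℝ (latticeEmbed '' (S : Set (ℤ × ℤ)))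

open Set intervalIntegral

-- from t2.lean

lemma graph_null (f : ℝ → ℝ) (hf : Continuous f) : volume {p : ℝ × ℝ | p.2 = f p.1} = 0 := by
  have hG : MeasurableSet {p : ℝ × ℝ | p.2 = f p.1} :=
    (isClosed_eq continuous_snd (hf.comp continuous_fst)).measurableSet
  rw [Measure.volume_eq_prod, Measure.prod_apply hG]
  simp [Set.preimage, Set.eq_singleton_iff_unique_mem]

lemma volume_closedRegion {m : ℝ} (hm : 0 ≤ m) (lo hi : ℝ → ℝ)
    (hlo : Continuous lo) (hhi : Continuous hi)
    (hle : ∀ x ∈ Icc (0:ℝ) m, lo x ≤ hi x) :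
    volume {p : ℝ × ℝ | p.1 ∈ Icc (0:ℝ) m ∧ lo p.1 ≤ p.2 ∧ p.2 ≤ hi p.1}
      = ENNReal.ofReal (∫ x in (0:ℝ)..m, (hi x - lo x)) := by
  set S := {p : ℝ × ℝ | p.1 ∈ Icc (0:ℝ) m ∧ lo p.1 ≤ p.2 ∧ p.2 ≤ hi p.1} with hS
  have h1 : regionBetween lo hi (Icc 0 m) ⊆ S := by
    rintro ⟨x, y⟩ ⟨hx, hy⟩
    exact ⟨hx, hy.1.le, hy.2.le⟩
  have h2 : S ⊆ regionBetween lo hi (Icc 0 m) ∪ ({p : ℝ × ℝ | p.2 = lo p.1} ∪ {p : ℝ × ℝ | p.2 = hi p.1}) := by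
    rintro ⟨x, y⟩ ⟨hx, hy1, hy2⟩
    rcases eq_or_lt_of_le hy1 with h | h
    · exact Or.inr (Or.inl h.symm)
    rcases eq_or_lt_of_le hy2 with h' | h'
    · exact Or.inr (Or.inr h')
    · exact Or.inl ⟨hx, h, h'⟩
  have hnull : volume ({p : ℝ × ℝ | p.2 = lo p.1} ∪ {p : ℝ × ℝ | p.2 = hi p.1}) = 0 :=
    measure_union_null (graph_null _ hlo) (graph_null _ hhi)
  have hvol : volume S = volume (regionBetween lo hi (Icc 0 m)) := by
    refine le_antisymm ?_ (measure_mono h1)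
    calc volume S ≤ volume (regionBetween lo hi (Icc 0 m) ∪ _) := measure_mono h2
      _ ≤ volume (regionBetween lo hi (Icc 0 m)) + 0 := by
          rw [← hnull]; exact measure_union_le _ _
      _ = _ := by simp
  rw [hvol, Measure.volume_eq_prod]
  rw [volume_regionBetween_eq_integral (hlo.integrableOn_Icc) (hhi.integrableOn_Icc)
    measurableSet_Icc hle]
  rw [MeasureTheory.integral_Icc_eq_integral_Ioc, ← intervalIntegral.integral_of_le hm]
  rfl


-- from t3.lean

lemma mem_seg_snd {c a b t : ℝ} (hab : a ≤ b) (h1 : a ≤ t) (h2 : t ≤ b) :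
    ((c, t) : ℝ × ℝ) ∈ segment ℝ (c, a) (c, b) := by
  rcases eq_or_lt_of_le hab with rfl | hlt
  · have : t = a := le_antisymm h2 h1
    subst this; exact left_mem_segment _ _ _
  · have hba : b - a ≠ 0 := ne_of_gt (by linarith)
    refine ⟨(b - t)/(b - a), (t - a)/(b - a),
      div_nonneg (by linarith) (by linarith), div_nonneg (by linarith) (by linarith), ?_, ?_⟩
    · field_simp; ring
    · simp only [Prod.smul_mk, smul_eq_mul, Prod.mk_add_mk, Prod.mk.injEq]
      constructor <;> field_simp <;> ring
lemma T_desc {c a b : ℝ} (hc : 0 < c) (hab : a ≤ b) :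
    convexHull ℝ {((0:ℝ),(0:ℝ)), (c,a), (c,b)}
      = {p : ℝ × ℝ | 0 ≤ p.1 ∧ p.1 ≤ c ∧ a * p.1 ≤ c * p.2 ∧ c * p.2 ≤ b * p.1} := by
  apply Subset.antisymm
  · apply convexHull_min
    · rintro p hp
      rcases hp with h | h | h <;> subst h <;> dsimp <;>
        refine ⟨by linarith, by linarith, by nlinarith, by nlinarith⟩
    · rintro ⟨x₁, y₁⟩ hx ⟨x₂, y₂⟩ hy u w hu hw huw
      obtain ⟨h1, h2, h3, h4⟩ := hx
      obtain ⟨h1', h2', h3', h4'⟩ := hy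
      dsimp at *
      refine ⟨by nlinarith, by nlinarith, by nlinarith, by nlinarith⟩
  · rintro ⟨x, y⟩ ⟨h1, h2, h3, h4⟩
    dsimp at *
    rcases eq_or_lt_of_le h1 with h0 | h0
    · rw [← h0] at h3 h4
      simp only [mul_zero] at h3 h4
      have hy0 : y = 0 := by nlinarith
      have hxy : ((x:ℝ), y) = ((0:ℝ), (0:ℝ)) := by simp [← h0, hy0]
      rw [hxy]
      exact subset_convexHull ℝ _ (by simp)
    · have hw : ((c:ℝ), c * y / x) ∈ convexHull ℝ {((0:ℝ),(0:ℝ)), (c,a), (c,b)} := by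
        have ha' : a ≤ c * y / x := by rw [le_div_iff₀ h0]; nlinarith
        have hb' : c * y / x ≤ b := by rw [div_le_iff₀ h0]; nlinarith
        exact (convex_convexHull ℝ _).segment_subset
          (subset_convexHull ℝ _ (by simp)) (subset_convexHull ℝ _ (by simp))
          (mem_seg_snd hab ha' hb')
      have hx : ((x:ℝ), y) ∈ segment ℝ ((0:ℝ),(0:ℝ)) ((c:ℝ), c * y / x) := by
        refine ⟨1 - x / c, x / c, by rw [sub_nonneg, div_le_one hc]; exact h2, by positivity, by ring, ?_⟩
        simp only [Prod.smul_mk, smul_eq_mul, Prod.mk_add_mk, Prod.mk.injEq]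
        constructor
        · field_simp; ring
        · field_simp; ring
      exact (convex_convexHull ℝ _).segment_subset
        (subset_convexHull ℝ _ (by simp)) hw hx


-- from t4.lean

lemma cont_min (c : ℝ) : Continuous (fun x : ℝ => min x c) := continuous_id.min continuous_const
lemma cont_max : Continuous (fun x : ℝ => max 0 (x - 1)) :=
  continuous_const.max (continuous_id.sub continuous_const)

lemma Imin {c : ℝ} (hc : 0 < c) : ∫ x in (0:ℝ)..(c+1), min x c = c^2/2 + c := by
  have h1 : ∫ x in (0:ℝ)..c, min x c = c^2/2 := by
    rw [integral_congr (g := fun x => x) (fun x hx => ?_), integral_id]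
    · ring
    · rw [uIcc_of_le (by linarith)] at hx
      exact min_eq_left hx.2
  have h2 : ∫ x in c..(c+1), min x c = c := by
    rw [integral_congr (g := fun _ => c) (fun x hx => ?_), intervalIntegral.integral_const]
    · simp
    · rw [uIcc_of_le (by linarith)] at hx
      exact min_eq_right hx.1
  rw [← integral_add_adjacent_intervals (b := c)
    (((cont_min c).intervalIntegrable _ _)) (((cont_min c).intervalIntegrable _ _)), h1, h2]

lemma Imax {c : ℝ} (hc : 0 < c) : ∫ x in (0:ℝ)..(c+1), max 0 (x-1) = c^2/2 := by
  have h1 : ∫ x in (0:ℝ)..1, max 0 (x-1) = 0 := by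
    rw [integral_congr (g := fun _ => (0:ℝ)) (fun x hx => ?_), intervalIntegral.integral_const]
    · simp
    · rw [uIcc_of_le (by linarith)] at hx
      exact max_eq_left (by linarith [hx.2])
  have h2 : ∫ x in (1:ℝ)..(c+1), max 0 (x-1) = c^2/2 := by
    rw [integral_congr (g := fun x => x - 1) (fun x hx => ?_)]
    · rw [integral_sub (intervalIntegrable_id) (intervalIntegrable_const), integral_id,
        intervalIntegral.integral_const]
      simp; ring
    · rw [uIcc_of_le (by linarith)] at hx
      exact max_eq_right (by linarith [hx.1])
  rw [← integral_add_adjacent_intervals (b := (1:ℝ))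
    ((cont_max.intervalIntegrable _ _)) ((cont_max.intervalIntegrable _ _)), h1, h2]
  ring



lemma seg_vert : convexHull ℝ {((0:ℝ),(0:ℝ)), (0,1)} = ({(0:ℝ)} : Set ℝ) ×ˢ Icc (0:ℝ) 1 := by
  have h : ({((0:ℝ),(0:ℝ)), (0,1)} : Set (ℝ × ℝ)) = ({0} : Set ℝ) ×ˢ ({0,1} : Set ℝ) := by
    ext ⟨x, y⟩
    simp [Prod.ext_iff, and_or_left]
  rw [h, convexHull_prod, convexHull_pair, convexHull_singleton, segment_eq_Icc zero_le_one]

-- from t5.lean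

lemma seg_horiz : convexHull ℝ {((0:ℝ),(0:ℝ)), (1,0)} = Icc (0:ℝ) 1 ×ˢ {(0:ℝ)} := by
  have h : ({((0:ℝ),(0:ℝ)), (1,0)} : Set (ℝ × ℝ)) = ({0,1} : Set ℝ) ×ˢ ({0} : Set ℝ) := by
    ext ⟨x, y⟩
    simp [Prod.ext_iff, and_or_left]
    tauto
  rw [h, convexHull_prod, convexHull_pair, convexHull_singleton, segment_eq_Icc zero_le_one]

lemma B_desc {c a b : ℝ} (hc : 0 < c) (hab : a ≤ b) :
    convexHull ℝ {((0:ℝ),(0:ℝ)), (1,0)} + convexHull ℝ {((0:ℝ),(0:ℝ)), (c,a), (c,b)}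
      = {p : ℝ × ℝ | ∃ t, max 0 (p.1 - 1) ≤ t ∧ t ≤ min p.1 c ∧
          a * t ≤ c * p.2 ∧ c * p.2 ≤ b * t} := by
  rw [seg_horiz, T_desc hc hab]
  ext ⟨x, y⟩
  constructor
  · rintro ⟨⟨s, y₁⟩, hs, ⟨t, y₂⟩, ht, heq⟩
    obtain ⟨hs01, hy₁⟩ := hs
    obtain ⟨ht0, htc, hat, hbt⟩ := ht
    simp only [mem_Icc] at hs01
    simp only [mem_singleton_iff] at hy₁
    subst hy₁
    simp only [Prod.mk_add_mk, Prod.mk.injEq, zero_add] at heq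
    dsimp only at *
    obtain ⟨hx, hy⟩ := heq
    subst hy
    refine ⟨t, ?_, ?_, hat, hbt⟩
    · exact max_le (by linarith [hs01.1, hs01.2]) (by dsimp; linarith [hs01.2])
    · exact le_min (by dsimp; linarith [hs01.1]) htc
  · rintro ⟨t, ht1, ht2, hat, hbt⟩
    have h1 : 0 ≤ t := le_trans (le_max_left _ _) ht1
    have h2 : t ≤ c := le_trans ht2 (min_le_right _ _)
    have h3 : x - 1 ≤ t := le_trans (le_max_right _ _) ht1
    have h4 : t ≤ x := le_trans ht2 (min_le_left _ _)
    dsimp only at ht1 ht2 hat hbt h3 h4 ⊢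
    exact ⟨(x - t, 0), ⟨mem_Icc.mpr ⟨show (0:ℝ) ≤ x - t by linarith,
        show x - t ≤ 1 by linarith⟩, rfl⟩, (t, y), ⟨h1, h2, hat, hbt⟩, by simp⟩


-- from t6.lean

lemma volB {c a b : ℝ} (hc : 0 < c) (hab : a ≤ b) :
    volume (convexHull ℝ {((0:ℝ),(0:ℝ)), (1,0)} + convexHull ℝ {((0:ℝ),(0:ℝ)), (c,a), (c,b)})
      = ENNReal.ofReal (c*(b-a)/2 + (max b 0 - min a 0)) := by
  rw [B_desc hc hab]
  have hminmax : ∀ x : ℝ, 0 ≤ x → x ≤ c + 1 → max 0 (x-1) ≤ min x c := fun x h1 h2 =>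
    max_le (le_min h1 hc.le) (le_min (by linarith) (by linarith))
  rcases le_total 0 a with ha | ha
  · -- 0 ≤ a ≤ b
    have hb : 0 ≤ b := ha.trans hab
    have hset : {p : ℝ × ℝ | ∃ t, max 0 (p.1 - 1) ≤ t ∧ t ≤ min p.1 c ∧
          a * t ≤ c * p.2 ∧ c * p.2 ≤ b * t}
        = {p : ℝ × ℝ | p.1 ∈ Icc (0:ℝ) (c+1) ∧ (fun x => a/c * max 0 (x-1)) p.1 ≤ p.2 ∧
            p.2 ≤ (fun x => b/c * min x c) p.1} := by
      ext ⟨x, y⟩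
      simp only [mem_setOf_eq, mem_Icc]
      constructor
      · rintro ⟨t, ht1, ht2, hat, hbt⟩
        have h1 : 0 ≤ t := le_trans (le_max_left _ _) ht1
        have h3 : x - 1 ≤ t := le_trans (le_max_right _ _) ht1
        have h4 : t ≤ x := le_trans ht2 (min_le_left _ _)
        have h5 : t ≤ c := le_trans ht2 (min_le_right _ _)
        refine ⟨⟨by linarith, by linarith⟩, ?_, ?_⟩
        · rw [div_mul_eq_mul_div, div_le_iff₀ hc]
          nlinarith [mul_le_mul_of_nonneg_left ht1 ha]
        · rw [div_mul_eq_mul_div, le_div_iff₀ hc]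
          nlinarith [mul_le_mul_of_nonneg_left ht2 hb]
      · rintro ⟨⟨hx0, hx1⟩, hlo, hhi⟩
        rw [div_mul_eq_mul_div, div_le_iff₀ hc] at hlo
        rw [div_mul_eq_mul_div, le_div_iff₀ hc] at hhi
        rcases eq_or_lt_of_le hb with hb0 | hb0
        · have ha0 : a = 0 := le_antisymm (hab.trans hb0.symm.le) ha
          subst ha0
          have hb0' : b = 0 := hb0.symm
          subst hb0'
          simp only [zero_mul] at hlo hhi
          refine ⟨min x c, hminmax x hx0 hx1, le_refl _, by simp; linarith, by simp; linarith⟩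
        · refine ⟨max (max 0 (x-1)) (c*y/b), le_max_left _ _, ?_, ?_, ?_⟩
          · exact max_le (hminmax x hx0 hx1) (by rw [div_le_iff₀ hb0]; nlinarith)
          · rcases max_cases (max 0 (x-1)) (c*y/b) with ⟨heqt, _⟩ | ⟨heqt, _⟩ <;> rw [heqt]
            · nlinarith
            · have hcy : 0 ≤ c * y := le_trans (by nlinarith [le_max_left (0:ℝ) (x-1), mul_le_mul_of_nonneg_left (le_max_left (0:ℝ) (x-1)) ha]) (by nlinarith : a * max 0 (x-1) ≤ c*y)
              rw [mul_div_assoc']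
              rw [div_le_iff₀ hb0]
              nlinarith
          · have : c*y/b ≤ max (max 0 (x-1)) (c*y/b) := le_max_right _ _
            rw [div_le_iff₀ hb0] at this
            nlinarith
    rw [hset, volume_closedRegion (by linarith : (0:ℝ) ≤ c+1) (fun x => a/c * max 0 (x-1)) (fun x => b/c * min x c)
      (continuous_const.mul cont_max) (continuous_const.mul (cont_min c))
      (fun x hx => by
        have h1 := hminmax x hx.1 hx.2
        have h0 : 0 ≤ max 0 (x-1) := le_max_left _ _
        have hd : a/c ≤ b/c := (div_le_div_iff_of_pos_right hc).2 hab
        have hbc : 0 ≤ b/c := div_nonneg hb hc.le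
        nlinarith [mul_nonneg hbc (sub_nonneg.mpr h1), mul_nonneg (sub_nonneg.mpr hd) h0])]
    · congr 1
      rw [integral_sub (f := fun x => b/c * min x c) (g := fun x => a/c * max 0 (x-1)) ((continuous_const.mul (cont_min c)).intervalIntegrable _ _)
        ((continuous_const.mul cont_max).intervalIntegrable _ _),
        intervalIntegral.integral_const_mul, intervalIntegral.integral_const_mul, Imin hc, Imax hc,
        max_eq_left hb, min_eq_right ha]
      field_simp
      ring
  · rcases le_total 0 b with hb | hb
    · -- a ≤ 0 ≤ b
      have hset : {p : ℝ × ℝ | ∃ t, max 0 (p.1 - 1) ≤ t ∧ t ≤ min p.1 c ∧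
            a * t ≤ c * p.2 ∧ c * p.2 ≤ b * t}
          = {p : ℝ × ℝ | p.1 ∈ Icc (0:ℝ) (c+1) ∧ (fun x => a/c * min x c) p.1 ≤ p.2 ∧
              p.2 ≤ (fun x => b/c * min x c) p.1} := by
        ext ⟨x, y⟩
        simp only [mem_setOf_eq, mem_Icc]
        constructor
        · rintro ⟨t, ht1, ht2, hat, hbt⟩
          have h1 : 0 ≤ t := le_trans (le_max_left _ _) ht1
          have h3 : x - 1 ≤ t := le_trans (le_max_right _ _) ht1
          have h4 : t ≤ x := le_trans ht2 (min_le_left _ _)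
          have h5 : t ≤ c := le_trans ht2 (min_le_right _ _)
          refine ⟨⟨by linarith, by linarith⟩, ?_, ?_⟩
          · rw [div_mul_eq_mul_div, div_le_iff₀ hc]
            nlinarith [mul_le_mul_of_nonpos_left ht2 ha]
          · rw [div_mul_eq_mul_div, le_div_iff₀ hc]
            nlinarith [mul_le_mul_of_nonneg_left ht2 hb]
        · rintro ⟨⟨hx0, hx1⟩, hlo, hhi⟩
          rw [div_mul_eq_mul_div, div_le_iff₀ hc] at hlo
          rw [div_mul_eq_mul_div, le_div_iff₀ hc] at hhi
          exact ⟨min x c, hminmax x hx0 hx1, le_refl _, by nlinarith, by nlinarith⟩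
      rw [hset, volume_closedRegion (by linarith : (0:ℝ) ≤ c+1) (fun x => a/c * min x c) (fun x => b/c * min x c)
        (continuous_const.mul (cont_min c)) (continuous_const.mul (cont_min c))
        (fun x hx => by
          have h0 : 0 ≤ min x c := le_min hx.1 hc.le
          have : a/c ≤ b/c := (div_le_div_iff_of_pos_right hc).2 hab
          nlinarith)]
      congr 1
      rw [integral_sub (f := fun x => b/c * min x c) (g := fun x => a/c * min x c) ((continuous_const.mul (cont_min c)).intervalIntegrable _ _)
        ((continuous_const.mul (cont_min c)).intervalIntegrable _ _),
        intervalIntegral.integral_const_mul, intervalIntegral.integral_const_mul, Imin hc,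
        max_eq_left hb, min_eq_left ha]
      field_simp
    · -- a ≤ b ≤ 0
      have hset : {p : ℝ × ℝ | ∃ t, max 0 (p.1 - 1) ≤ t ∧ t ≤ min p.1 c ∧
            a * t ≤ c * p.2 ∧ c * p.2 ≤ b * t}
          = {p : ℝ × ℝ | p.1 ∈ Icc (0:ℝ) (c+1) ∧ (fun x => a/c * min x c) p.1 ≤ p.2 ∧
              p.2 ≤ (fun x => b/c * max 0 (x-1)) p.1} := by
        ext ⟨x, y⟩
        simp only [mem_setOf_eq, mem_Icc]
        constructor
        · rintro ⟨t, ht1, ht2, hat, hbt⟩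
          have h1 : 0 ≤ t := le_trans (le_max_left _ _) ht1
          have h3 : x - 1 ≤ t := le_trans (le_max_right _ _) ht1
          have h4 : t ≤ x := le_trans ht2 (min_le_left _ _)
          have h5 : t ≤ c := le_trans ht2 (min_le_right _ _)
          refine ⟨⟨by linarith, by linarith⟩, ?_, ?_⟩
          · rw [div_mul_eq_mul_div, div_le_iff₀ hc]
            nlinarith [mul_le_mul_of_nonpos_left ht2 ha]
          · rw [div_mul_eq_mul_div, le_div_iff₀ hc]
            nlinarith [mul_le_mul_of_nonpos_left ht1 hb]
        · rintro ⟨⟨hx0, hx1⟩, hlo, hhi⟩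
          rw [div_mul_eq_mul_div, div_le_iff₀ hc] at hlo
          rw [div_mul_eq_mul_div, le_div_iff₀ hc] at hhi
          rcases eq_or_lt_of_le ha with ha0 | ha0
          · have hb0 : b = 0 := le_antisymm hb (ha0 ▸ hab)
            subst ha0
            subst hb0
            simp only [zero_mul] at hlo hhi
            refine ⟨min x c, hminmax x hx0 hx1, le_refl _, by simp; linarith, by simp; linarith⟩
          · refine ⟨max (max 0 (x-1)) (c*y/a), le_max_left _ _, ?_, ?_, ?_⟩
            · refine max_le (hminmax x hx0 hx1) ?_
              rw [div_le_iff_of_neg ha0]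
              nlinarith
            · rcases max_cases (max 0 (x-1)) (c*y/a) with ⟨heqt, hge⟩ | ⟨heqt, hge⟩ <;> rw [heqt]
              · have := (div_le_iff_of_neg ha0).1 hge
                nlinarith
              · rw [mul_div_assoc', mul_comm, mul_div_assoc, div_self (ne_of_lt ha0), mul_one]
            · have hcy : c * y ≤ 0 := by
                have h0 : 0 ≤ max 0 (x-1) := le_max_left _ _
                nlinarith
              rcases max_cases (max 0 (x-1)) (c*y/a) with ⟨heqt, hge⟩ | ⟨heqt, hge⟩ <;> rw [heqt]
              · nlinarith
              · have h0 : 0 ≤ c*y/a := (le_div_iff_of_neg ha0).2 (by linarith)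
                rw [mul_div_assoc']
                rw [le_div_iff_of_neg ha0]
                nlinarith
      rw [hset, volume_closedRegion (by linarith : (0:ℝ) ≤ c+1) (fun x => a/c * min x c) (fun x => b/c * max 0 (x-1))
        (continuous_const.mul (cont_min c)) (continuous_const.mul cont_max)
        (fun x hx => by
          have h1 := hminmax x hx.1 hx.2
          have h0 : 0 ≤ max 0 (x-1) := le_max_left _ _
          have haq : a/c ≤ b/c := (div_le_div_iff_of_pos_right hc).2 hab
          have hbq : b/c ≤ 0 := div_nonpos_of_nonpos_of_nonneg hb hc.le
          have haq' : a/c ≤ 0 := div_nonpos_of_nonpos_of_nonneg ha hc.le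
          nlinarith)]
      congr 1
      rw [integral_sub (f := fun x => b/c * max 0 (x-1)) (g := fun x => a/c * min x c) ((continuous_const.mul cont_max).intervalIntegrable _ _)
        ((continuous_const.mul (cont_min c)).intervalIntegrable _ _),
        intervalIntegral.integral_const_mul, intervalIntegral.integral_const_mul, Imin hc, Imax hc,
        max_eq_right hb, min_eq_left ha]
      field_simp
      ring


-- from t7.lean

noncomputable def shL (d : ℝ) : (ℝ × ℝ) →ₗ[ℝ] (ℝ × ℝ) where
  toFun p := (p.1, p.2 + d * p.1)
  map_add' p q := by simp [Prod.ext_iff]; ring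
  map_smul' r p := by simp [Prod.ext_iff, smul_eq_mul]; ring

lemma shear_mp (d : ℝ) : MeasurePreserving (fun p : ℝ × ℝ => (p.1, p.2 + d * p.1))
    (volume : Measure (ℝ × ℝ)) volume := by
  rw [Measure.volume_eq_prod]
  exact (MeasurePreserving.id volume).skew_product
    (by fun_prop) (Filter.Eventually.of_forall fun a => map_add_right_eq_self volume _)

lemma shear_image_eq_preimage (d : ℝ) (S : Set (ℝ × ℝ)) :
    shL d '' S = (fun p : ℝ × ℝ => (p.1, p.2 + (-d) * p.1)) ⁻¹' S := by
  ext ⟨x, y⟩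
  constructor
  · rintro ⟨⟨u, w⟩, hS, heq⟩
    simp only [shL, LinearMap.coe_mk, AddHom.coe_mk, Prod.mk.injEq] at heq
    obtain ⟨h1, h2⟩ := heq
    have hxy : ((x:ℝ), y + -d * x) = (u, w) := by
      rw [Prod.mk.injEq]
      refine ⟨h1.symm, ?_⟩
      rw [← h2, ← h1]; ring
    show ((x:ℝ), y + -d * x) ∈ S
    rw [hxy]; exact hS
  · intro h
    exact ⟨(x, y + -d * x), h, by simp only [shL, LinearMap.coe_mk, AddHom.coe_mk, Prod.mk.injEq]; exact ⟨trivial, by ring⟩⟩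

lemma shear_volume (d : ℝ) (S : Set (ℝ × ℝ)) (hS : MeasurableSet S) :
    volume (shL d '' S) = volume S := by
  rw [shear_image_eq_preimage]
  exact (shear_mp (-d)).measure_preimage hS.nullMeasurableSet

lemma image_add_hom (f : (ℝ × ℝ) →ₗ[ℝ] (ℝ × ℝ)) (A B : Set (ℝ × ℝ)) :
    f '' (A + B) = f '' A + f '' B := by
  ext p
  simp only [Set.mem_add, Set.mem_image]
  constructor
  · rintro ⟨q, ⟨a, ha, b, hb, rfl⟩, rfl⟩
    exact ⟨f a, ⟨a, ha, rfl⟩, f b, ⟨b, hb, rfl⟩, (f.map_add a b).symm⟩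
  · rintro ⟨fa, ⟨a, ha, rfl⟩, fb, ⟨b, hb, rfl⟩, rfl⟩
    exact ⟨a + b, ⟨a, ha, b, hb, rfl⟩, f.map_add a b⟩

-- image of hull vertices under shear
lemma shear_seg_vert (d : ℝ) :
    shL d '' convexHull ℝ {((0:ℝ),(0:ℝ)), (0,1)} = convexHull ℝ {((0:ℝ),(0:ℝ)), (0,1)} := by
  rw [LinearMap.image_convexHull]
  congr 1
  simp [Set.image_insert_eq, shL]

lemma shear_seg_horiz (d : ℝ) :
    shL d '' convexHull ℝ {((0:ℝ),(0:ℝ)), (1,0)} = convexHull ℝ {((0:ℝ),(0:ℝ)), (1,d)} := by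
  rw [LinearMap.image_convexHull]
  congr 1
  simp [Set.image_insert_eq, shL]

lemma shear_T (d c a b : ℝ) :
    shL d '' convexHull ℝ {((0:ℝ),(0:ℝ)), (c,a), (c,b)}
      = convexHull ℝ {((0:ℝ),(0:ℝ)), (c, a + d*c), (c, b + d*c)} := by
  rw [LinearMap.image_convexHull]
  congr 1
  simp [Set.image_insert_eq, shL, mul_comm]


-- from t8.lean

lemma null_vert : volume (convexHull ℝ {((0:ℝ),(0:ℝ)), (0,1)}) = 0 := by
  rw [seg_vert, Measure.volume_eq_prod, Measure.prod_prod]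
  simp

lemma null_horiz : volume (convexHull ℝ {((0:ℝ),(0:ℝ)), (1,0)}) = 0 := by
  rw [seg_horiz, Measure.volume_eq_prod, Measure.prod_prod]
  simp

lemma vol_square :
    volume (convexHull ℝ {((0:ℝ),(0:ℝ)), (0,1)} + convexHull ℝ {((0:ℝ),(0:ℝ)), (1,0)}) = 1 := by
  rw [seg_vert, seg_horiz]
  have h : (({(0:ℝ)} : Set ℝ) ×ˢ Icc (0:ℝ) 1) + (Icc (0:ℝ) 1 ×ˢ ({(0:ℝ)} : Set ℝ))
      = Icc (0:ℝ) 1 ×ˢ Icc (0:ℝ) 1 := by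
    ext ⟨x, y⟩
    simp only [Set.mem_add, mem_prod, mem_singleton_iff, mem_Icc]
    constructor
    · rintro ⟨⟨u, s⟩, ⟨hu, hs⟩, ⟨t, w⟩, ⟨ht, hw⟩, heq⟩
      simp only [Prod.mk_add_mk, Prod.mk.injEq] at heq
      obtain ⟨h1, h2⟩ := heq
      subst hu; subst hw
      constructor
      · constructor <;> [linarith [ht.1]; linarith [ht.2]]
      · constructor <;> [linarith [hs.1]; linarith [hs.2]]
    · rintro ⟨⟨hx0, hx1⟩, hy0, hy1⟩
      exact ⟨(0, y), ⟨rfl, hy0, hy1⟩, (x, 0), ⟨⟨hx0, hx1⟩, rfl⟩, by simp⟩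
  rw [h, Measure.volume_eq_prod, Measure.prod_prod, Real.volume_Icc]
  norm_num

lemma volT {c a b : ℝ} (hc : 0 < c) (hab : a ≤ b) :
    volume (convexHull ℝ {((0:ℝ),(0:ℝ)), (c,a), (c,b)}) = ENNReal.ofReal (c*(b-a)/2) := by
  rw [T_desc hc hab]
  have hset : {p : ℝ × ℝ | 0 ≤ p.1 ∧ p.1 ≤ c ∧ a * p.1 ≤ c * p.2 ∧ c * p.2 ≤ b * p.1}
      = {p : ℝ × ℝ | p.1 ∈ Icc (0:ℝ) c ∧ (fun x => a/c*x) p.1 ≤ p.2 ∧ p.2 ≤ (fun x => b/c*x) p.1} := by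
    ext ⟨x, y⟩
    simp only [mem_setOf_eq, mem_Icc]
    rw [div_mul_eq_mul_div, div_le_iff₀ hc, div_mul_eq_mul_div, le_div_iff₀ hc]
    constructor
    · rintro ⟨h1, h2, h3, h4⟩; exact ⟨⟨h1, h2⟩, by linarith, by linarith⟩
    · rintro ⟨⟨h1, h2⟩, h3, h4⟩; exact ⟨h1, h2, by linarith, by linarith⟩
  rw [hset, volume_closedRegion hc.le (fun x => a/c*x) (fun x => b/c*x) (continuous_const.mul continuous_id')
    (continuous_const.mul continuous_id')
    (fun x hx => by
      have hd : a/c ≤ b/c := (div_le_div_iff_of_pos_right hc).2 hab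
      nlinarith [hx.1])]
  congr 1
  rw [integral_sub (f := fun x => b/c*x) (g := fun x => a/c*x) ((continuous_const.mul continuous_id').intervalIntegrable _ _)
    ((continuous_const.mul continuous_id').intervalIntegrable _ _),
    intervalIntegral.integral_const_mul, intervalIntegral.integral_const_mul, integral_id]
  field_simp
  ring

lemma volC {c a b : ℝ} (hc : 0 < c) (hab : a ≤ b) :
    volume (convexHull ℝ {((0:ℝ),(0:ℝ)), (0,1)} + convexHull ℝ {((0:ℝ),(0:ℝ)), (c,a), (c,b)})
      = ENNReal.ofReal (c*(b-a)/2 + c) := by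
  rw [seg_vert, T_desc hc hab]
  have hset : (({(0:ℝ)} : Set ℝ) ×ˢ Icc (0:ℝ) 1)
        + {p : ℝ × ℝ | 0 ≤ p.1 ∧ p.1 ≤ c ∧ a * p.1 ≤ c * p.2 ∧ c * p.2 ≤ b * p.1}
      = {p : ℝ × ℝ | p.1 ∈ Icc (0:ℝ) c ∧ (fun x => a/c*x) p.1 ≤ p.2 ∧
          p.2 ≤ (fun x => b/c*x + 1) p.1} := by
    ext ⟨x, y⟩
    simp only [Set.mem_add, mem_prod, mem_singleton_iff, mem_Icc, mem_setOf_eq]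
    constructor
    · rintro ⟨⟨u, s⟩, ⟨hu, hs⟩, ⟨t, w⟩, ⟨ht0, htc, hat, hbt⟩, heq⟩
      subst hu
      simp only [Prod.mk_add_mk, zero_add, Prod.mk.injEq] at heq
      obtain ⟨h1, h2⟩ := heq
      subst h1; subst h2
      refine ⟨⟨ht0, htc⟩, ?_, ?_⟩
      · rw [div_mul_eq_mul_div, div_le_iff₀ hc]; nlinarith [hs.1]
      · rw [div_mul_eq_mul_div]
        have : w ≤ b*t/c := by rw [le_div_iff₀ hc]; nlinarith
        linarith [hs.2]
    · rintro ⟨⟨hx0, hxc⟩, hlo, hhi⟩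
      rw [div_mul_eq_mul_div, div_le_iff₀ hc] at hlo
      have hax : a * x ≤ b * x := by nlinarith
      rcases le_total y (b*x/c) with hy | hy
      · exact ⟨(0, 0), ⟨rfl, le_refl 0, zero_le_one⟩, (x, y),
          ⟨hx0, hxc, show a*x ≤ c*y by linarith,
            show c*y ≤ b*x by rw [le_div_iff₀ hc] at hy; linarith⟩, by simp⟩
      · have hcbx : c * (b*x/c) = b * x := by field_simp
        refine ⟨(0, y - b*x/c), ⟨rfl, by linarith, ?_⟩, (x, b*x/c),
          ⟨hx0, hxc, show a*x ≤ c*(b*x/c) by linarith,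
           show c*(b*x/c) ≤ b*x by linarith⟩, ?_⟩
        · rw [div_mul_eq_mul_div, ← sub_le_iff_le_add] at hhi
          linarith
        · simp
  rw [hset, volume_closedRegion hc.le (fun x => a/c*x) (fun x => b/c*x + 1) (continuous_const.mul continuous_id')
    ((continuous_const.mul continuous_id').add continuous_const)
    (fun x hx => by
      have hd : a/c ≤ b/c := (div_le_div_iff_of_pos_right hc).2 hab
      nlinarith [hx.1])]
  congr 1
  rw [integral_sub (f := fun x => b/c*x + 1) (g := fun x => a/c*x) (((continuous_const.mul continuous_id').add continuous_const).intervalIntegrable _ _)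
    ((continuous_const.mul continuous_id').intervalIntegrable _ _)]
  have : ∫ x in (0:ℝ)..c, (b/c*x + 1) = b/c * (c^2/2) + c := by
    rw [integral_add (f := fun x => b/c*x) ((continuous_const.mul continuous_id').intervalIntegrable _ _)
      intervalIntegrable_const, intervalIntegral.integral_const_mul, integral_id,
      intervalIntegral.integral_const]
    simp
  rw [this, intervalIntegral.integral_const_mul, integral_id]
  field_simp
  ring


-- from t9.lean




lemma meas_hull (S : Set (ℝ × ℝ)) (hS : S.Finite) : MeasurableSet (convexHull ℝ S) :=
  (hS.isCompact_convexHull (𝕜 := ℝ)).isClosed.measurableSet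

lemma meas_hull_sum (S T : Set (ℝ × ℝ)) (hS : S.Finite) (hT : T.Finite) :
    MeasurableSet (convexHull ℝ S + convexHull ℝ T) :=
  ((hS.isCompact_convexHull (𝕜 := ℝ)).add (hT.isCompact_convexHull (𝕜 := ℝ))).isClosed.measurableSet

lemma lattice_hull (S : Finset (ℤ × ℤ)) (hS : S.Nonempty) :
    IsLatticePolytope (convexHull ℝ (latticeEmbed '' (S : Set (ℤ × ℤ)))) :=
  ⟨S, hS, rfl⟩

lemma core' (c d e f : ℕ) (h1 : f < e + c * d) (h2 : e < f + c * d) (h3 : c * d < e + f)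
    (hef : f ≤ e) :
    ∃ P₁ P₂ P₃ P₄ : Set (ℝ × ℝ),
      IsLatticePolytope P₁ ∧ IsLatticePolytope P₂ ∧ IsLatticePolytope P₃ ∧ IsLatticePolytope P₄ ∧
      mixedArea P₁ P₂ = 1 ∧ mixedArea P₁ P₃ = 1 ∧ mixedArea P₁ P₄ = (c:ℝ) ∧
      mixedArea P₂ P₃ = (d:ℝ) ∧ mixedArea P₂ P₄ = (e:ℝ) ∧ mixedArea P₃ P₄ = (f:ℝ) := by
  have hcd : 1 ≤ c * d := by omega
  have hc : 1 ≤ c := by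
    rcases Nat.eq_zero_or_pos c with h0 | h0
    · rw [h0, zero_mul] at hcd; omega
    · exact h0
  have hd : 1 ≤ d := by
    rcases Nat.eq_zero_or_pos d with h0 | h0
    · rw [h0, mul_zero] at hcd; omega
    · exact h0
  have he : 1 ≤ e := by by_contra h; omega
  have hf : 1 ≤ f := by by_contra h; omega
  set B : ℕ := max e (c * d) - f with hB
  have hBle : B ≤ e := by omega
  have hfle : f ≤ max e (c * d) := by omega
  -- real versions
  set α : ℝ := (e : ℝ) with hα
  set β : ℝ := (B : ℝ) with hβ
  have hcR : (0:ℝ) < c := by exact_mod_cast hc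
  have hdR : (0:ℝ) < d := by exact_mod_cast hd
  have hβα : β ≤ α := by rw [hβ, hα]; exact_mod_cast hBle
  have hβ0 : 0 ≤ β := Nat.cast_nonneg B
  have hα0 : 0 ≤ α := Nat.cast_nonneg e
  have hBcast : β = max (e:ℝ) ((c:ℝ)*(d:ℝ)) - (f:ℝ) := by
    rw [hβ, hB]
    push_cast [Nat.cast_sub hfle]
    ring
  have h1R : (f:ℝ) < e + c*d := by exact_mod_cast h1
  have h2R : (e:ℝ) < f + c*d := by exact_mod_cast h2
  have h3R : (c:ℝ)*d < e + f := by exact_mod_cast h3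
  set Q₁ : Set (ℝ × ℝ) := convexHull ℝ {((0:ℝ),(0:ℝ)), (0,1)} with hQ1
  set Q₂ : Set (ℝ × ℝ) := convexHull ℝ {((0:ℝ),(0:ℝ)), (1,0)} with hQ2
  set Q₃ : Set (ℝ × ℝ) := convexHull ℝ {((0:ℝ),(0:ℝ)), (1,(d:ℝ))} with hQ3
  set Q₄ : Set (ℝ × ℝ) := convexHull ℝ {((0:ℝ),(0:ℝ)), ((c:ℝ),β), ((c:ℝ),α)} with hQ4
  -- individual volumes
  have hv1 : volume Q₁ = 0 := null_vert
  have hv2 : volume Q₂ = 0 := null_horiz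
  have hv3 : volume Q₃ = 0 := by
    rw [hQ3, ← shear_seg_horiz (d:ℝ),
      shear_volume _ _ (meas_hull _ (Set.toFinite _)), null_horiz]
  have hA0 : 0 ≤ (c:ℝ)*(α - β)/2 := div_nonneg (mul_nonneg hcR.le (by linarith)) (by norm_num)
  have hv4 : volume Q₄ = ENNReal.ofReal ((c:ℝ)*(α-β)/2) := volT hcR hβα
  -- pairwise volumes
  have hv12 : volume (Q₁ + Q₂) = 1 := vol_square
  have hv13 : volume (Q₁ + Q₃) = 1 := by
    rw [hQ1, hQ3, ← shear_seg_vert (d:ℝ), ← shear_seg_horiz (d:ℝ), ← image_add_hom,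
      shear_volume _ _ (meas_hull_sum _ _ (Set.toFinite _) (Set.toFinite _)), vol_square]
  have hv14 : volume (Q₁ + Q₄) = ENNReal.ofReal ((c:ℝ)*(α-β)/2 + c) := volC hcR hβα
  have hv23 : volume (Q₂ + Q₃) = ENNReal.ofReal (d:ℝ) := by
    have : ({((0:ℝ),(0:ℝ)), (1,(d:ℝ))} : Set (ℝ × ℝ)) = {((0:ℝ),(0:ℝ)), (1,(d:ℝ)), (1,(d:ℝ))} := by
      simp
    rw [hQ2, hQ3, this, volB one_pos (le_refl (d:ℝ))]
    congr 1
    rw [max_eq_left (le_of_lt hdR), min_eq_right (le_of_lt hdR)]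
    ring
  have hv24 : volume (Q₂ + Q₄) = ENNReal.ofReal ((c:ℝ)*(α-β)/2 + e) := by
    rw [hQ2, hQ4, volB hcR hβα]
    congr 1
    rw [max_eq_left hα0, min_eq_right hβ0]
    rw [hα]
    ring
  have hv34 : volume (Q₃ + Q₄) = ENNReal.ofReal ((c:ℝ)*(α-β)/2 + f) := by
    have himg : Q₃ + Q₄ = shL (d:ℝ) ''
        (convexHull ℝ {((0:ℝ),(0:ℝ)), (1,0)} +
         convexHull ℝ {((0:ℝ),(0:ℝ)), ((c:ℝ), β - (c:ℝ)*(d:ℝ)), ((c:ℝ), α - (c:ℝ)*(d:ℝ))}) := by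
      rw [image_add_hom, shear_seg_horiz, shear_T]
      rw [hQ3, hQ4]
      congr 3 <;> ring
    rw [himg, shear_volume _ _ (meas_hull_sum _ _ (Set.toFinite _) (Set.toFinite _)),
      volB hcR (by linarith : β - (c:ℝ)*(d:ℝ) ≤ α - (c:ℝ)*(d:ℝ))]
    congr 1
    have hspread : max (α - (c:ℝ)*(d:ℝ)) 0 - min (β - (c:ℝ)*(d:ℝ)) 0 = (f:ℝ) := by
      rcases le_total ((c:ℝ)*(d:ℝ)) α with hDα | hDα
      · have hmax : max (e:ℝ) ((c:ℝ)*(d:ℝ)) = (e:ℝ) := max_eq_left (by rw [hα] at hDα; exact hDα)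
        rw [hBcast, hmax] at *
        rw [max_eq_left (by linarith), min_eq_left (by rw [hα] at *; linarith)]
        rw [hα]; ring
      · have hmax : max (e:ℝ) ((c:ℝ)*(d:ℝ)) = (c:ℝ)*(d:ℝ) := max_eq_right (by rw [hα] at hDα; exact hDα)
        rw [hBcast, hmax] at *
        rw [max_eq_right (by linarith), min_eq_left (by linarith)]
        ring
    rw [hspread]
    ring
  -- conclude
  refine ⟨Q₁, Q₂, Q₃, Q₄, ?_, ?_, ?_, ?_, ?_, ?_, ?_, ?_, ?_, ?_⟩
  · refine ⟨{(0,0),(0,1)}, ⟨(0,0), by simp⟩, ?_⟩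
    rw [hQ1]; congr 1
    simp [latticeEmbed, Finset.coe_insert, Set.image_insert_eq, Prod.ext_iff]
  · refine ⟨{(0,0),(1,0)}, ⟨(0,0), by simp⟩, ?_⟩
    rw [hQ2]; congr 1
    simp [latticeEmbed, Finset.coe_insert, Set.image_insert_eq, Prod.ext_iff]
  · refine ⟨{(0,0),(1,(d:ℤ))}, ⟨(0,0), by simp⟩, ?_⟩
    rw [hQ3]; congr 1
    simp [latticeEmbed, Finset.coe_insert, Set.image_insert_eq, Prod.ext_iff]
  · refine ⟨{(0,0),((c:ℤ),(B:ℤ)),((c:ℤ),(e:ℤ))}, ⟨(0,0), by simp⟩, ?_⟩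
    rw [hQ4]; congr 1
    simp [latticeEmbed, Finset.coe_insert, Set.image_insert_eq, Prod.ext_iff, hβ, hα]
  all_goals unfold mixedArea
  · rw [hv12, hv1, hv2]; simp
  · rw [hv13, hv1, hv3]; simp
  · rw [hv14, hv1, hv4]
    rw [ENNReal.toReal_ofReal (by linarith [hcR.le]), ENNReal.toReal_ofReal hA0]
    simp
  · rw [hv23, hv2, hv3]
    rw [ENNReal.toReal_ofReal (by positivity)]
    simp
  · rw [hv24, hv2, hv4]
    rw [ENNReal.toReal_ofReal (by linarith [Nat.cast_nonneg (α := ℝ) e]), ENNReal.toReal_ofReal hA0]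
    simp; exact hα.symm
  · rw [hv34, hv3, hv4]
    rw [ENNReal.toReal_ofReal (by linarith [Nat.cast_nonneg (α := ℝ) f]), ENNReal.toReal_ofReal hA0]
    simp


-- from t10.lean


lemma mixedArea_comm (P Q : Set (ℝ × ℝ)) : mixedArea P Q = mixedArea Q P := by
  unfold mixedArea
  rw [add_comm]
  ring


lemma core (c d e f : ℕ) (h1 : f < e + c * d) (h2 : e < f + c * d) (h3 : c * d < e + f) :
    ∃ P₁ P₂ P₃ P₄ : Set (ℝ × ℝ),
      IsLatticePolytope P₁ ∧ IsLatticePolytope P₂ ∧ IsLatticePolytope P₃ ∧ IsLatticePolytope P₄ ∧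
      mixedArea P₁ P₂ = 1 ∧ mixedArea P₁ P₃ = 1 ∧ mixedArea P₁ P₄ = (c:ℝ) ∧
      mixedArea P₂ P₃ = (d:ℝ) ∧ mixedArea P₂ P₄ = (e:ℝ) ∧ mixedArea P₃ P₄ = (f:ℝ) := by
  rcases le_total f e with hef | hef
  · exact core' c d e f h1 h2 h3 hef
  · obtain ⟨P₁, P₂, P₃, P₄, L1, L2, L3, L4, m12, m13, m14, m23, m24, m34⟩ :=
      core' c d f e h2 h1 (by omega) hef
    exact ⟨P₁, P₃, P₂, P₄, L1, L3, L2, L4, m13, m12, m14,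
      by rw [mixedArea_comm]; exact m23, m34, m24⟩

set_option maxHeartbeats 2000000 in
lemma assemble (v : Fin 4 → Fin 4 → ℕ) (hsymm : ∀ i j, v i j = v j i)
    (hpl₁ : v 0 3 * v 1 2 < v 0 1 * v 2 3 + v 0 2 * v 1 3)
    (hpl₂ : v 0 1 * v 2 3 < v 0 2 * v 1 3 + v 0 3 * v 1 2)
    (hpl₃ : v 0 2 * v 1 3 < v 0 3 * v 1 2 + v 0 1 * v 2 3)
    (i j k l : Fin 4) (hij' : i ≠ j) (hik' : i ≠ k) (hil' : i ≠ l)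
    (hjk' : j ≠ k) (hjl' : j ≠ l) (hkl' : k ≠ l)
    (hij1 : v i j = 1) (hik1 : v i k = 1) :
    ∃ P : Fin 4 → Set (ℝ × ℝ),
      (∀ a, IsLatticePolytope (P a)) ∧
      (∀ a b, a < b → mixedArea (P a) (P b) = (v a b : ℝ)) := by
  have hs10 : v 1 0 = v 0 1 := hsymm 1 0
  have hs20 : v 2 0 = v 0 2 := hsymm 2 0
  have hs30 : v 3 0 = v 0 3 := hsymm 3 0
  have hs21 : v 2 1 = v 1 2 := hsymm 2 1
  have hs31 : v 3 1 = v 1 3 := hsymm 3 1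
  have hs32 : v 3 2 = v 2 3 := hsymm 3 2
  have hT : v k l * v i j < v j l * v i k + v i l * v j k ∧
      v j l * v i k < v k l * v i j + v i l * v j k ∧
      v i l * v j k < v j l * v i k + v k l * v i j := by
    fin_cases i <;> fin_cases j <;> fin_cases k <;> fin_cases l <;>
      first
        | exact absurd rfl hij'
        | exact absurd rfl hik'
        | exact absurd rfl hil'
        | exact absurd rfl hjk'
        | exact absurd rfl hjl'
        | exact absurd rfl hkl'
        | (simp only [show (⟨0, by omega⟩ : Fin 4) = 0 from rfl,
             show (⟨1, by omega⟩ : Fin 4) = 1 from rfl,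
             show (⟨2, by omega⟩ : Fin 4) = 2 from rfl,
             show (⟨3, by omega⟩ : Fin 4) = 3 from rfl,
             hs10, hs20, hs30, hs21, hs31, hs32]
           exact ⟨by linarith, by linarith, by linarith⟩)
  rw [hij1, mul_one, hik1, mul_one] at hT
  obtain ⟨hT1, hT2, hT3⟩ := hT
  obtain ⟨P₁, P₂, P₃, P₄, L1, L2, L3, L4, m12, m13, m14, m23, m24, m34⟩ :=
    core (v i l) (v j k) (v j l) (v k l) hT1 hT2 hT3
  have hcov : ∀ t : Fin 4, t = i ∨ t = j ∨ t = k ∨ t = l := by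
    intro t
    have d1 : i.1 ≠ j.1 := fun h => hij' (Fin.ext h)
    have d2 : i.1 ≠ k.1 := fun h => hik' (Fin.ext h)
    have d3 : i.1 ≠ l.1 := fun h => hil' (Fin.ext h)
    have d4 : j.1 ≠ k.1 := fun h => hjk' (Fin.ext h)
    have d5 : j.1 ≠ l.1 := fun h => hjl' (Fin.ext h)
    have d6 : k.1 ≠ l.1 := fun h => hkl' (Fin.ext h)
    have b1 := i.isLt; have b2 := j.isLt; have b3 := k.isLt; have b4 := l.isLt
    have b5 := t.isLt
    have : t.1 = i.1 ∨ t.1 = j.1 ∨ t.1 = k.1 ∨ t.1 = l.1 := by omega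
    rcases this with h | h | h | h
    exacts [Or.inl (Fin.ext h), Or.inr (Or.inl (Fin.ext h)),
      Or.inr (Or.inr (Or.inl (Fin.ext h))), Or.inr (Or.inr (Or.inr (Fin.ext h)))]
  classical
  refine ⟨fun t => if t = i then P₁ else if t = j then P₂ else if t = k then P₃ else P₄, ?_, ?_⟩
  · intro a
    dsimp only
    split_ifs <;> assumption
  · have hPi : (if i = i then P₁ else if i = j then P₂ else if i = k then P₃ else P₄) = P₁ :=
      if_pos rfl
    have hPj : (if j = i then P₁ else if j = j then P₂ else if j = k then P₃ else P₄) = P₂ := by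
      rw [if_neg (Ne.symm hij'), if_pos rfl]
    have hPk : (if k = i then P₁ else if k = j then P₂ else if k = k then P₃ else P₄) = P₃ := by
      rw [if_neg (Ne.symm hik'), if_neg (Ne.symm hjk'), if_pos rfl]
    have hPl : (if l = i then P₁ else if l = j then P₂ else if l = k then P₃ else P₄) = P₄ := by
      rw [if_neg (Ne.symm hil'), if_neg (Ne.symm hjl'), if_neg (Ne.symm hkl')]
    intro a b hab
    dsimp only
    rcases hcov a with rfl | rfl | rfl | rfl <;> rcases hcov b with rfl | rfl | rfl | rfl
    · exact absurd hab (lt_irrefl _)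
    · rw [hPi, hPj, m12, hij1]; norm_num
    · rw [hPi, hPk, m13, hik1]; norm_num
    · rw [hPi, hPl, m14]
    · rw [hPj, hPi, mixedArea_comm, m12, hsymm a b, hij1]; norm_num
    · exact absurd hab (lt_irrefl _)
    · rw [hPj, hPk, m23]
    · rw [hPj, hPl, m24]
    · rw [hPk, hPi, mixedArea_comm, m13, hsymm a b, hik1]; norm_num
    · rw [hPk, hPj, mixedArea_comm, m23, hsymm a b]
    · exact absurd hab (lt_irrefl _)
    · rw [hPk, hPl, m34]
    · rw [hPl, hPi, mixedArea_comm, m14, hsymm a b]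
    · rw [hPl, hPj, mixedArea_comm, m24, hsymm a b]
    · rw [hPl, hPk, mixedArea_comm, m34, hsymm a b]
    · exact absurd hab (lt_irrefl _)

/-- An interior point of the discrete Plücker set (all three Plücker-type inequalities
strict) with two adjacent coordinates equal to `1` is realized by four lattice polytopes.
Here the tuple is encoded as a symmetric function `v : Fin 4 → Fin 4 → ℕ` on the edges
of `K₄`. -/
theorem interior_two_ones_realizable (v : Fin 4 → Fin 4 → ℕ)
    (hsymm : ∀ i j, v i j = v j i)
    (hpl₁ : v 0 3 * v 1 2 < v 0 1 * v 2 3 + v 0 2 * v 1 3)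
    (hpl₂ : v 0 1 * v 2 3 < v 0 2 * v 1 3 + v 0 3 * v 1 2)
    (hpl₃ : v 0 2 * v 1 3 < v 0 3 * v 1 2 + v 0 1 * v 2 3)
    (hadj : ∃ i j k : Fin 4, j ≠ k ∧ i ≠ j ∧ i ≠ k ∧ v i j = 1 ∧ v i k = 1) :
    ∃ P : Fin 4 → Set (ℝ × ℝ),
      (∀ i, IsLatticePolytope (P i)) ∧
      (∀ i j, i < j → mixedArea (P i) (P j) = (v i j : ℝ)) := by
  obtain ⟨i, j, k, hjk, hij, hik, hv1, hv2⟩ := hadj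
  have d1 : i.1 ≠ j.1 := fun h => hij (Fin.ext h)
  have d2 : i.1 ≠ k.1 := fun h => hik (Fin.ext h)
  have d3 : j.1 ≠ k.1 := fun h => hjk (Fin.ext h)
  have b1 := i.isLt; have b2 := j.isLt; have b3 := k.isLt
  refine assemble v hsymm hpl₁ hpl₂ hpl₃ i j k ⟨6 - (i.1 + j.1 + k.1), by omega⟩
    hij hik (fun h => ?_) hjk (fun h => ?_) (fun h => ?_) hv1 hv2
  · have := congrArg Fin.val h; simp at this; omega
  · have := congrArg Fin.val h; simp at this; omega
  · have := congrArg Fin.val h; simp at this; omega
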